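/- Let U ⊂ ℝ^n be a bounded open set, and let f be a real-analytic function on an open set containing cl(U). Suppose there is an integer k ≥ 1 such that the k-th partial derivative ∂^k f/∂x_n^k is nonvanishing on cl(U). Then there is a constant B, depending on f, U and k but not on ε, such that for all ε > 0 the Lebesgue measure of {x ∈ U : |f(x)| < ε} is at most B ε^{1/k}. -/

import Mathlib

open MeasureTheory Set

/-- The partial derivative of `g` in the `n`-th coordinate direction. -/
noncomputable def partialDerivLast {n : ℕ} (g : (Fin (n + 1) → ℝ) → ℝ) :
    (Fin (n + 1) → ℝ) → ℝ :=
  fun x => fderiv ℝ g x (Pi.single (Fin.last n) 1)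



lemma gapLemma {h h' : ℝ → ℝ} {a b c : ℝ} (hder : ∀ t ∈ Icc a b, HasDerivAt h (h' t) t)
    (hlow : ∀ t ∈ Icc a b, c ≤ |h' t|) {s t : ℝ} (hs : s ∈ Icc a b) (ht : t ∈ Icc a b)
    (hst : s ≤ t) : c * (t - s) ≤ |h t - h s| := by
  rcases eq_or_lt_of_le hst with rfl | hlt
  · simp
  have hsub : Icc s t ⊆ Icc a b := Icc_subset_Icc hs.1 ht.2
  have hcont : ContinuousOn h (Icc s t) := fun u hu =>
    ((hder u (hsub hu)).continuousAt).continuousWithinAt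
  obtain ⟨ξ, hξ, hξ'⟩ := exists_hasDerivAt_eq_slope h h' hlt hcont
    (fun u hu => hder u (hsub (Ioo_subset_Icc_self hu)))
  have hξab : ξ ∈ Icc a b := hsub (Ioo_subset_Icc_self hξ)
  have : c ≤ |h' ξ| := hlow ξ hξab
  have h1 : |h t - h s| = |h' ξ| * (t - s) := by
    rw [hξ', abs_div, abs_of_pos (by linarith : (0:ℝ) < t - s), div_mul_cancel₀]
    linarith
  rw [h1]
  exact mul_le_mul_of_nonneg_right this (by linarith)

lemma oneDim (g : ℝ → ℝ) (ε : ℝ) (hε : 0 < ε) :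
    ∀ k : ℕ, 1 ≤ k → ∀ c : ℝ, 0 < c → ∀ a b : ℝ,
    (∀ j : ℕ, ∀ t ∈ Icc a b, HasDerivAt (iteratedDeriv j g) (iteratedDeriv (j+1) g t) t) →
    (∀ t ∈ Icc a b, c ≤ |iteratedDeriv k g t|) →
    volume {t ∈ Icc a b | |g t| < ε} ≤ ENNReal.ofReal ((4:ℝ)^k * (ε/c) ^ (1/(k:ℝ))) := by
  intro k hk
  induction k, hk using Nat.le_induction with
  | base =>
    intro c hc a b hder hlow
    have hx : (0:ℝ) < ε / c := div_pos hε hc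
    have hb : (4:ℝ)^(1:ℕ) * (ε/c) ^ (1/((1:ℕ):ℝ)) = 4 * (ε/c) := by norm_num
    rw [hb]
    by_cases hS : {t ∈ Icc a b | |g t| < ε} = ∅
    · rw [hS]; simp
    obtain ⟨s0, hs0⟩ := nonempty_iff_ne_empty.2 hS
    have hder1 : ∀ t ∈ Icc a b, HasDerivAt g (iteratedDeriv 1 g t) t := by
      intro t ht
      have := hder 0 t ht
      rwa [iteratedDeriv_zero] at this
    -- every point of S is within 2ε/c of s0
    have key : ∀ t ∈ {t ∈ Icc a b | |g t| < ε}, |t - s0| ≤ 2 * ε / c := by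
      intro t ht
      rcases le_total s0 t with hle | hle
      · have := gapLemma hder1 hlow hs0.1 ht.1 hle
        have habs : |g t - g s0| < 2 * ε := by
          calc |g t - g s0| ≤ |g t| + |g s0| := abs_sub _ _
            _ < 2 * ε := by have := ht.2; have := hs0.2; linarith
        rw [abs_of_nonneg (by linarith), le_div_iff₀ hc]
        nlinarith
      · have := gapLemma hder1 hlow ht.1 hs0.1 hle
        have habs : |g s0 - g t| < 2 * ε := by
          calc |g s0 - g t| ≤ |g s0| + |g t| := abs_sub _ _
            _ < 2 * ε := by have := ht.2; have := hs0.2; linarith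
        rw [abs_of_nonpos (by linarith), le_div_iff₀ hc]
        nlinarith
    have hsub : {t ∈ Icc a b | |g t| < ε} ⊆ Icc (s0 - 2*ε/c) (s0 + 2*ε/c) := by
      intro t ht
      have := key t ht
      rw [abs_le] at this
      constructor <;> linarith [this.1, this.2]
    calc volume {t ∈ Icc a b | |g t| < ε} ≤ volume (Icc (s0 - 2*ε/c) (s0 + 2*ε/c)) :=
          measure_mono hsub
      _ = ENNReal.ofReal (4 * (ε/c)) := by
          rw [Real.volume_Icc]; congr 1; ring
  | succ k hk IH =>
    intro c hc a b hder hlow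
    have hkR : (1:ℝ) ≤ (k:ℝ) := by exact_mod_cast hk
    have hk0 : (k:ℝ) ≠ 0 := by linarith
    have hk1 : (k:ℝ) + 1 ≠ 0 := by linarith
    have hx : (0:ℝ) < ε / c := div_pos hε hc
    set δ : ℝ := (ε/c) ^ (1/((k:ℝ)+1)) with hδdef
    have hδ : 0 < δ := Real.rpow_pos_of_pos hx _
    have hcast : ((k+1 : ℕ):ℝ) = (k:ℝ) + 1 := by push_cast; ring
    have hδeq : (ε/c) ^ (1/((k+1:ℕ):ℝ)) = δ := by rw [hcast]
    have hkey : (ε / (c*δ)) ^ (1/(k:ℝ)) = δ := by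
      have h1 : ε / (c*δ) = (ε/c) ^ ((k:ℝ)/((k:ℝ)+1)) := by
        have : (k:ℝ)/((k:ℝ)+1) = 1 - 1/((k:ℝ)+1) := by field_simp; ring
        rw [this, Real.rpow_sub hx, Real.rpow_one, ← hδdef]
        rw [div_div]
      rw [h1, ← Real.rpow_mul hx.le]
      rw [hδdef]
      congr 1
      field_simp
    set h := iteratedDeriv k g with hh
    have hderh : ∀ t ∈ Icc a b, HasDerivAt h (iteratedDeriv (k+1) g t) t := hder k
    by_cases hE : ∀ t ∈ Icc a b, c*δ ≤ |h t|
    · have hIH := IH (c*δ) (mul_pos hc hδ) a b hder hE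
      refine hIH.trans (ENNReal.ofReal_le_ofReal ?_)
      rw [hkey, hδeq]
      have h4 : (4:ℝ)^k ≤ 4^(k+1) := by
        apply pow_le_pow_right₀ (by norm_num) (Nat.le_succ k)
      nlinarith
    · push_neg at hE
      obtain ⟨e, he, helow⟩ := hE
      have hside1 : ∀ t ∈ Icc a (min b (e - 2*δ)), c*δ ≤ |h t| := by
        rintro t ⟨hta, htm⟩
        have htb : t ≤ b := le_trans htm (min_le_left _ _)
        have hte : t ≤ e - 2*δ := le_trans htm (min_le_right _ _)
        have hgap := gapLemma hderh hlow ⟨hta, htb⟩ he (by linarith)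
        have htri : |h e - h t| ≤ |h e| + |h t| := abs_sub _ _
        nlinarith [hc.le, hδ.le, mul_le_mul_of_nonneg_left (show 2*δ ≤ e - t by linarith) hc.le]
      have hside2 : ∀ t ∈ Icc (max a (e + 2*δ)) b, c*δ ≤ |h t| := by
        rintro t ⟨htm, htb⟩
        have hta : a ≤ t := le_trans (le_max_left _ _) htm
        have hte : e + 2*δ ≤ t := le_trans (le_max_right _ _) htm
        have hgap := gapLemma hderh hlow he ⟨hta, htb⟩ (by linarith)
        have htri : |h t - h e| ≤ |h t| + |h e| := abs_sub _ _
        nlinarith [hc.le, hδ.le, mul_le_mul_of_nonneg_left (show 2*δ ≤ t - e by linarith) hc.le]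
      have hI1 := IH (c*δ) (mul_pos hc hδ) a (min b (e - 2*δ))
        (fun j t ht => hder j t (Icc_subset_Icc le_rfl (min_le_left _ _) ht)) hside1
      have hI2 := IH (c*δ) (mul_pos hc hδ) (max a (e + 2*δ)) b
        (fun j t ht => hder j t (Icc_subset_Icc (le_max_left _ _) le_rfl ht)) hside2
      rw [hkey] at hI1 hI2
      have hsplit : {t ∈ Icc a b | |g t| < ε} ⊆
          ({t ∈ Icc a (min b (e - 2*δ)) | |g t| < ε} ∪ Icc (e - 2*δ) (e + 2*δ)) ∪
          {t ∈ Icc (max a (e + 2*δ)) b | |g t| < ε} := by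
        rintro t ⟨⟨hta, htb⟩, htg⟩
        rcases le_or_gt t (e - 2*δ) with h1 | h1
        · exact Or.inl (Or.inl ⟨⟨hta, le_min htb h1⟩, htg⟩)
        rcases le_or_gt t (e + 2*δ) with h2 | h2
        · exact Or.inl (Or.inr ⟨h1.le, h2⟩)
        · exact Or.inr ⟨⟨max_le hta h2.le, htb⟩, htg⟩
      have hmid : volume (Icc (e - 2*δ) (e + 2*δ)) = ENNReal.ofReal (4*δ) := by
        rw [Real.volume_Icc]; congr 1; ring
      have hfin : (4:ℝ)^k * δ + 4*δ + 4^k * δ ≤ 4^(k+1) * (ε/c) ^ (1/((k+1:ℕ):ℝ)) := by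
        rw [hδeq]
        have h4 : (4:ℝ) ≤ 4^k := by
          calc (4:ℝ) = 4^1 := (pow_one _).symm
          _ ≤ 4^k := pow_le_pow_right₀ (by norm_num) hk
        have : (4:ℝ)^(k+1) = 4 * 4^k := by ring
        nlinarith
      calc volume {t ∈ Icc a b | |g t| < ε}
          ≤ volume (({t ∈ Icc a (min b (e - 2*δ)) | |g t| < ε} ∪ Icc (e - 2*δ) (e + 2*δ)) ∪
            {t ∈ Icc (max a (e + 2*δ)) b | |g t| < ε}) := measure_mono hsplit
        _ ≤ (volume {t ∈ Icc a (min b (e - 2*δ)) | |g t| < ε} + volume (Icc (e - 2*δ) (e + 2*δ)))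
            + volume {t ∈ Icc (max a (e + 2*δ)) b | |g t| < ε} :=
            le_trans (measure_union_le _ _) (add_le_add (measure_union_le _ _) le_rfl)
        _ ≤ (ENNReal.ofReal (4^k * δ) + ENNReal.ofReal (4*δ)) + ENNReal.ofReal (4^k * δ) := by
            exact add_le_add (add_le_add hI1 hmid.le) hI2
        _ = ENNReal.ofReal (4^k * δ + 4*δ + 4^k * δ) := by
            rw [← ENNReal.ofReal_add (by positivity) (by positivity),
              ← ENNReal.ofReal_add (by positivity) (by positivity)]
        _ ≤ ENNReal.ofReal (4^(k+1) * (ε/c) ^ (1/((k+1:ℕ):ℝ))) := ENNReal.ofReal_le_ofReal hfin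

lemma analytic_iter {n : ℕ} {W : Set (Fin (n+1) → ℝ)} {f : (Fin (n+1) → ℝ) → ℝ}
    (hf : AnalyticOnNhd ℝ f W) : ∀ j : ℕ, AnalyticOnNhd ℝ (partialDerivLast^[j] f) W := by
  intro j
  induction j with
  | zero => simpa using hf
  | succ j ih =>
    rw [Function.iterate_succ_apply']
    exact (ContinuousLinearMap.apply ℝ ℝ (Pi.single (Fin.last n) 1)).comp_analyticOnNhd ih.fderiv

lemma line_eq {n : ℕ} (y : Fin n → ℝ) (t : ℝ) :
    Fin.insertNth (α := fun _ : Fin (n+1) => ℝ) (Fin.last n) t y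
      = Fin.insertNth (α := fun _ : Fin (n+1) => ℝ) (Fin.last n) 0 y + t • (Pi.single (Fin.last n) 1 : Fin (n+1) → ℝ) := by
  funext j
  induction j using (Fin.last n).succAboveCases with
  | x => simp
  | p i => simp [Fin.insertNth_apply_succAbove, Pi.single_eq_of_ne (Fin.castSucc_lt_last i).ne]

lemma line_hasDerivAt {n : ℕ} (y : Fin n → ℝ) (t : ℝ) :
    HasDerivAt (fun s : ℝ => Fin.insertNth (α := fun _ : Fin (n+1) => ℝ) (Fin.last n) s y)
      ((Pi.single (Fin.last n) 1 : Fin (n+1) → ℝ)) t := by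
  have : (fun s : ℝ => Fin.insertNth (α := fun _ : Fin (n+1) => ℝ) (Fin.last n) s y)
      = fun s => Fin.insertNth (α := fun _ : Fin (n+1) => ℝ) (Fin.last n) 0 y + s • (Pi.single (Fin.last n) 1 : Fin (n+1) → ℝ) := by
    funext s; exact line_eq y s
  rw [this]
  simpa using ((hasDerivAt_id t).smul_const ((Pi.single (Fin.last n) 1 : Fin (n+1) → ℝ))).const_add
    (Fin.insertNth (α := fun _ : Fin (n+1) => ℝ) (Fin.last n) 0 y)

lemma slice_deriv {n : ℕ} {W : Set (Fin (n+1) → ℝ)} (hW : IsOpen W)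
    {f : (Fin (n+1) → ℝ) → ℝ} (hf : AnalyticOnNhd ℝ f W) (y : Fin n → ℝ)
    (L : ℝ → (Fin (n+1) → ℝ))
    (hL : L = fun s => Fin.insertNth (α := fun _ : Fin (n+1) => ℝ) (Fin.last n) s y) :
    ∀ (j : ℕ) (t : ℝ), L t ∈ W →
      iteratedDeriv j (fun s => f (L s)) t = (partialDerivLast^[j] f) (L t) ∧
      HasDerivAt (iteratedDeriv j (fun s => f (L s)))
        ((partialDerivLast^[j+1] f) (L t)) t := by
  have hLd : ∀ t, HasDerivAt L ((Pi.single (Fin.last n) 1 : Fin (n+1) → ℝ)) t := by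
    intro t; rw [hL]; exact line_hasDerivAt y t
  have hLc : Continuous L := by
    have := (hLd 0).continuousAt
    exact continuous_iff_continuousAt.2 fun t => (hLd t).continuousAt
  set O : Set ℝ := L ⁻¹' W with hO
  have hOopen : IsOpen O := hW.preimage hLc
  have hA : ∀ (j : ℕ) (t : ℝ), t ∈ O →
      HasDerivAt (fun s => (partialDerivLast^[j] f) (L s))
        ((partialDerivLast^[j+1] f) (L t)) t := by
    intro j t ht
    have hdiff : DifferentiableAt ℝ (partialDerivLast^[j] f) (L t) :=
      ((analytic_iter hf j) (L t) ht).differentiableAt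
    have := hdiff.hasFDerivAt.comp_hasDerivAt t (hLd t)
    rw [Function.iterate_succ_apply']
    exact this
  have hB : ∀ j : ℕ, EqOn (iteratedDeriv j (fun s => f (L s)))
      (fun s => (partialDerivLast^[j] f) (L s)) O := by
    intro j
    induction j with
    | zero => intro t ht; simp
    | succ j ih =>
      intro t ht
      have hev : iteratedDeriv j (fun s => f (L s)) =ᶠ[nhds t]
          (fun s => (partialDerivLast^[j] f) (L s)) :=
        Filter.eventuallyEq_of_mem (hOopen.mem_nhds ht) ih
      rw [iteratedDeriv_succ, hev.deriv_eq, (hA j t ht).deriv]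
  intro j t ht
  refine ⟨hB j ht, ?_⟩
  exact (hA j t ht).congr_of_eventuallyEq
    (Filter.eventuallyEq_of_mem (hOopen.mem_nhds ht) (hB j))

lemma ball_estimate {n k : ℕ} (hk : 1 ≤ k) {W V : Set (Fin (n+1) → ℝ)}
    (hWopen : IsOpen W) (hVW : V ⊆ W)
    {f : (Fin (n+1) → ℝ) → ℝ} (hf : AnalyticOnNhd ℝ f W) {c : ℝ} (hc : 0 < c)
    (hlow : ∀ x ∈ V, c ≤ |(partialDerivLast^[k] f) x|)
    {z : Fin (n+1) → ℝ} {r : ℝ} (hr : 0 ≤ r) (hzV : Metric.closedBall z r ⊆ V)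
    {ε : ℝ} (hε : 0 < ε) :
    volume {x ∈ Metric.closedBall z r | |f x| < ε} ≤
      ENNReal.ofReal ((2*r)^n * ((4:ℝ)^k * (ε/c) ^ (1/(k:ℝ)))) := by
  classical
  set i0 := Fin.last n with hi0
  set e := MeasurableEquiv.piFinSuccAbove (fun _ : Fin (n+1) => ℝ) i0 with he
  set S := {x ∈ Metric.closedBall z r | |f x| < ε} with hS
  have hcBW : Metric.closedBall z r ⊆ W := fun x hx => hVW (hzV hx)
  have hOopen : IsOpen (W ∩ f ⁻¹' Metric.ball 0 ε) :=
    hf.continuousOn.isOpen_inter_preimage hWopen Metric.isOpen_ball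
  have hSeq : S = Metric.closedBall z r ∩ (W ∩ f ⁻¹' Metric.ball 0 ε) := by
    ext x
    simp only [hS, mem_setOf_eq, mem_inter_iff, mem_preimage, Metric.mem_ball,
      Real.dist_eq, sub_zero]
    constructor
    · rintro ⟨h1, h2⟩; exact ⟨h1, hcBW h1, h2⟩
    · rintro ⟨h1, _, h2⟩; exact ⟨h1, h2⟩
  have hSm : MeasurableSet S := by
    rw [hSeq]; exact Metric.isClosed_closedBall.measurableSet.inter hOopen.measurableSet
  have hmp := MeasureTheory.volume_preserving_piFinSuccAbove (fun _ : Fin (n+1) => ℝ) i0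
  set T : Set (ℝ × (Fin n → ℝ)) := e.symm ⁻¹' S with hT
  have hTm : MeasurableSet T := e.symm.measurable hSm
  have h1 : volume S = volume T := by
    have := hmp.measure_preimage hTm.nullMeasurableSet
    rw [← this]
    congr 1
    rw [hT, ← Set.preimage_comp]
    rw [show (⇑e.symm ∘ ⇑e) = id from funext fun x => e.symm_apply_apply x, Set.preimage_id]
  have h2 : volume T = ∫⁻ y, volume ((fun t => (t, y)) ⁻¹' T) ∂(volume : Measure (Fin n → ℝ)) := by
    rw [Measure.volume_eq_prod, Measure.prod_apply_symm hTm]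
  set y0 : Fin n → ℝ := fun j => z (i0.succAbove j) with hy0
  set M : ENNReal := ENNReal.ofReal ((4:ℝ)^k * (ε/c) ^ (1/(k:ℝ))) with hM
  have hmem : ∀ (t : ℝ) (y : Fin n → ℝ),
      (i0.insertNth t y ∈ Metric.closedBall z r) ↔
        (t ∈ Icc (z i0 - r) (z i0 + r) ∧ y ∈ Metric.closedBall y0 r) := by
    intro t y
    rw [Metric.mem_closedBall, dist_pi_le_iff hr, Fin.forall_iff_succAbove i0,
      Metric.mem_closedBall, dist_pi_le_iff hr]
    simp only [Fin.insertNth_apply_same, Fin.insertNth_apply_succAbove, Real.dist_eq,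
      mem_Icc, hy0]
    constructor
    · rintro ⟨h1, h2⟩
      rw [abs_le] at h1
      exact ⟨⟨by linarith [h1.1], by linarith [h1.2]⟩, h2⟩
    · rintro ⟨h1, h2⟩
      rw [abs_le]
      exact ⟨⟨by linarith [h1.1], by linarith [h1.2]⟩, h2⟩
  have hslice : ∀ (t : ℝ) (y : Fin n → ℝ), ((t, y) ∈ T ↔ i0.insertNth t y ∈ S) := by
    intro t y
    rw [hT, Set.mem_preimage]
    have : e.symm (t, y) = i0.insertNth t y := by
      simp [he, MeasurableEquiv.piFinSuccAbove_symm_apply, Fin.insertNthEquiv]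
    rw [this]
  have hsliceb : ∀ y : Fin n → ℝ, volume ((fun t => (t, y)) ⁻¹' T) ≤
      Set.indicator (Metric.closedBall y0 r) (fun _ => M) y := by
    intro y
    by_cases hy : y ∈ Metric.closedBall y0 r
    · rw [Set.indicator_of_mem hy]
      -- the slice is contained in the sublevel set on the interval
      have hsub : ((fun t => (t, y)) ⁻¹' T) ⊆
          {t ∈ Icc (z i0 - r) (z i0 + r) | |(fun s => f (i0.insertNth s y)) t| < ε} := by
        intro t ht
        rw [Set.mem_preimage, hslice t y] at ht
        exact ⟨((hmem t y).1 ht.1).1, ht.2⟩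
      refine (measure_mono hsub).trans ?_
      have hLW : ∀ t ∈ Icc (z i0 - r) (z i0 + r), i0.insertNth t y ∈ V := by
        intro t ht
        exact hzV ((hmem t y).2 ⟨ht, hy⟩)
      have hsd := slice_deriv hWopen hf y (fun s => i0.insertNth s y) rfl
      refine oneDim (fun s => f (i0.insertNth s y)) ε hε k hk c hc _ _ ?_ ?_
      · intro j t ht
        have htW : i0.insertNth t y ∈ W := hVW (hLW t ht)
        have h1 := (hsd j t htW).2
        rw [← (hsd (j+1) t htW).1] at h1
        exact h1
      · intro t ht
        have htW : i0.insertNth t y ∈ W := hVW (hLW t ht)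
        rw [(hsd k t htW).1]
        exact hlow _ (hLW t ht)
    · rw [Set.indicator_of_notMem hy]
      have : ((fun t => (t, y)) ⁻¹' T) = ∅ := by
        ext t
        simp only [Set.mem_preimage, Set.mem_empty_iff_false, iff_false]
        intro ht
        rw [hslice t y] at ht
        exact hy ((hmem t y).1 ht.1).2
      rw [this]
      simp
  calc volume S = volume T := h1
    _ = ∫⁻ y, volume ((fun t => (t, y)) ⁻¹' T) ∂(volume : Measure (Fin n → ℝ)) := h2
    _ ≤ ∫⁻ y, Set.indicator (Metric.closedBall y0 r) (fun _ => M) y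
        ∂(volume : Measure (Fin n → ℝ)) := lintegral_mono hsliceb
    _ = M * volume (Metric.closedBall y0 r) := by
        rw [lintegral_indicator Metric.isClosed_closedBall.measurableSet, setLIntegral_const]
    _ = ENNReal.ofReal ((2*r)^n * ((4:ℝ)^k * (ε/c) ^ (1/(k:ℝ)))) := by
        rw [Real.volume_pi_closedBall y0 hr, hM, ← ENNReal.ofReal_mul (by positivity)]
        rw [mul_comm]
        congr 2
        simp


/-- **Van der Corput-type sublevel set estimate for real-analytic functions (Theorem 2.1, K = ℝ).**
Let `U ⊂ ℝ^n` be a bounded open set and `f` a real-analytic function on an open set containing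
`cl(U)`.  If for some `k ≥ 1` the derivative `∂^k f/∂x_n^k` is nonvanishing on `cl(U)`, then there
is a constant `B` (independent of `ε`) such that for all `ε > 0`,
`|{x ∈ U : |f(x)| < ε}| ≤ B ε^{1/k}`. -/
theorem sublevel_analytic_real (n : ℕ) (U : Set (Fin (n + 1) → ℝ))
    (hUopen : IsOpen U) (hUbdd : Bornology.IsBounded U)
    (W : Set (Fin (n + 1) → ℝ)) (hWopen : IsOpen W) (hUW : closure U ⊆ W)
    (f : (Fin (n + 1) → ℝ) → ℝ) (hf : AnalyticOnNhd ℝ f W)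
    (k : ℕ) (hk : 1 ≤ k)
    (hder : ∀ x ∈ closure U, (partialDerivLast^[k] f) x ≠ 0) :
    ∃ B : ℝ, ∀ ε : ℝ, 0 < ε →
      volume {x ∈ U | |f x| < ε} ≤ ENNReal.ofReal (B * ε ^ (1 / (k : ℝ))) := by
  classical
  by_cases hUe : U = ∅
  · exact ⟨0, fun ε hε => by rw [hUe]; simp⟩
  have hUne : U.Nonempty := nonempty_iff_ne_empty.2 hUe
  have hK : IsCompact (closure U) :=
    Metric.isCompact_of_isClosed_isBounded isClosed_closure hUbdd.closure
  have hKne : (closure U).Nonempty := hUne.closure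
  set D := partialDerivLast^[k] f with hD
  have hDc : ContinuousOn D W := (analytic_iter hf k).continuousOn
  have hDabs : ContinuousOn (fun x => |D x|) (closure U) := (hDc.mono hUW).abs
  obtain ⟨x0, hx0K, hx0min⟩ := hK.exists_isMinOn hKne hDabs
  set c := |D x0| with hc0
  have hc : 0 < c := abs_pos.2 (hder x0 hx0K)
  set V := W ∩ (fun x => |D x|) ⁻¹' Ioi (c/2) with hV
  have hVopen : IsOpen V := hDc.abs.isOpen_inter_preimage hWopen isOpen_Ioi
  have hVW : V ⊆ W := inter_subset_left
  have hKV : closure U ⊆ V := by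
    intro x hx
    exact ⟨hUW hx, lt_of_lt_of_le (half_lt_self hc) (isMinOn_iff.1 hx0min x hx)⟩
  have hlowV : ∀ x ∈ V, c/2 ≤ |D x| := fun x hx => (hx.2 : c/2 < |D x|).le
  have hex : ∀ x ∈ closure U, ∃ ρ : ℝ, 0 < ρ ∧ Metric.closedBall x ρ ⊆ V := by
    intro x hx
    obtain ⟨ρ, hρ, hρV⟩ :=
      (Metric.nhds_basis_closedBall.mem_iff).1 (hVopen.mem_nhds (hKV hx))
    exact ⟨ρ, hρ, hρV⟩
  choose! ρ hρpos hρsub using hex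
  obtain ⟨F, hFK, hcover⟩ := hK.elim_nhds_subcover (fun x => Metric.ball x (ρ x))
    (fun x hx => Metric.ball_mem_nhds x (hρpos x hx))
  refine ⟨(∑ z ∈ F, (2 * ρ z)^n) * ((4:ℝ)^k * (2/c) ^ (1/(k:ℝ))), fun ε hε => ?_⟩
  have hc2 : (0:ℝ) < c/2 := by linarith
  have hsub : {x ∈ U | |f x| < ε} ⊆
      ⋃ z ∈ F, {x ∈ Metric.closedBall z (ρ z) | |f x| < ε} := by
    rintro x ⟨hxU, hxf⟩
    have := hcover (subset_closure hxU)
    simp only [mem_iUnion] at this ⊢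
    obtain ⟨z, hzF, hxz⟩ := this
    exact ⟨z, hzF, Metric.ball_subset_closedBall hxz, hxf⟩
  have hball : ∀ z ∈ F, volume {x ∈ Metric.closedBall z (ρ z) | |f x| < ε} ≤
      ENNReal.ofReal ((2 * ρ z)^n * ((4:ℝ)^k * (ε/(c/2)) ^ (1/(k:ℝ)))) := by
    intro z hz
    exact ball_estimate hk hWopen hVW hf hc2 hlowV (hρpos z (hFK z hz)).le
      (hρsub z (hFK z hz)) hε
  have hrpow : (ε/(c/2)) ^ (1/(k:ℝ)) = (2/c) ^ (1/(k:ℝ)) * ε ^ (1/(k:ℝ)) := by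
    have h1 : ε/(c/2) = (2/c) * ε := by field_simp
    rw [h1, Real.mul_rpow (by positivity) hε.le]
  calc volume {x ∈ U | |f x| < ε}
      ≤ volume (⋃ z ∈ F, {x ∈ Metric.closedBall z (ρ z) | |f x| < ε}) := measure_mono hsub
    _ ≤ ∑ z ∈ F, volume {x ∈ Metric.closedBall z (ρ z) | |f x| < ε} :=
        measure_biUnion_finset_le F _
    _ ≤ ∑ z ∈ F, ENNReal.ofReal ((2 * ρ z)^n * ((4:ℝ)^k * (ε/(c/2)) ^ (1/(k:ℝ)))) :=
        Finset.sum_le_sum hball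
    _ = ENNReal.ofReal (∑ z ∈ F, (2 * ρ z)^n * ((4:ℝ)^k * (ε/(c/2)) ^ (1/(k:ℝ)))) := by
        rw [ENNReal.ofReal_sum_of_nonneg]
        intro z hz
        have := (hρpos z (hFK z hz)).le
        positivity
    _ = ENNReal.ofReal ((∑ z ∈ F, (2 * ρ z)^n) * ((4:ℝ)^k * (2/c) ^ (1/(k:ℝ))) * ε ^ (1/(k:ℝ))) := by
        congr 1
        rw [← Finset.sum_mul, hrpow]
        ring
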